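/- Define φ : ℝ → ℝ by φ(t) = −(1 + e^{2t})^{−1/2} and λ* : ℝ → ℝ by λ*(t) = 2·(φ(t)³ − φ(t)). Then (φ, λ*) is differentiable and solves the slow equations of the Duffing variational system for all t ∈ ℝ: φ′(t) = φ(t) − φ(t)³ + λ*(t) and (λ*)′(t) = (3·φ(t)² − 1)·λ*(t). -/

import Mathlib

open Real

lemma key (t : ℝ) :
    HasDerivAt (fun t : ℝ => -((1 + Real.exp (2 * t)) ^ (-(1 / 2) : ℝ)))
      ((-((1 + Real.exp (2 * t)) ^ (-(1 / 2) : ℝ))) ^ 3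
        - (-((1 + Real.exp (2 * t)) ^ (-(1 / 2) : ℝ)))) t := by
  have hu : (0:ℝ) < 1 + Real.exp (2 * t) := by positivity
  have h1 : HasDerivAt (fun t : ℝ => 1 + Real.exp (2 * t)) (Real.exp (2 * t) * 2) t := by
    simpa using (((hasDerivAt_id t).const_mul 2).exp).const_add 1
  have h2 := (h1.rpow_const (p := (-(1 / 2) : ℝ)) (Or.inl hu.ne')).fun_neg
  refine h2.congr_deriv (Eq.symm ?_)
  have h3 : ((1 + Real.exp (2 * t)) ^ (-(1 / 2) : ℝ)) ^ (3:ℕ)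
      = (1 + Real.exp (2 * t)) ^ (-(3 / 2) : ℝ) := by
    rw [← Real.rpow_natCast ((1 + Real.exp (2 * t)) ^ (-(1 / 2) : ℝ)) 3,
      ← Real.rpow_mul hu.le]
    norm_num
  have h4 : (-(1/2) : ℝ) - 1 = -(3/2) := by norm_num
  rw [h4]
  have h5 : (1 + Real.exp (2 * t)) ^ (-(1 / 2) : ℝ)
      = (1 + Real.exp (2 * t)) * (1 + Real.exp (2 * t)) ^ (-(3 / 2) : ℝ) := by
    rw [← Real.rpow_one_add' hu.le (by norm_num)]
    norm_num
  calc (-((1 + Real.exp (2 * t)) ^ (-(1 / 2) : ℝ))) ^ 3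
        - (-((1 + Real.exp (2 * t)) ^ (-(1 / 2) : ℝ)))
      = -(((1 + Real.exp (2 * t)) ^ (-(1 / 2) : ℝ)) ^ (3:ℕ))
        + (1 + Real.exp (2 * t)) ^ (-(1 / 2) : ℝ) := by ring
    _ = -((1 + Real.exp (2 * t)) ^ (-(3 / 2) : ℝ))
        + (1 + Real.exp (2 * t)) * (1 + Real.exp (2 * t)) ^ (-(3 / 2) : ℝ) := by
        rw [h3, ← h5]
    _ = -(Real.exp (2 * t) * 2 * (-(1 / 2)) * (1 + Real.exp (2 * t)) ^ (-(3 / 2) : ℝ)) := by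
        ring

theorem stmt7 (φ lstar : ℝ → ℝ)
    (hφ : ∀ t, φ t = -((1 + Real.exp (2 * t)) ^ (-(1 / 2) : ℝ)))
    (hl : ∀ t, lstar t = 2 * ((φ t) ^ 3 - φ t)) :
    Differentiable ℝ φ ∧ Differentiable ℝ lstar ∧
    (∀ t : ℝ, deriv φ t = φ t - (φ t) ^ 3 + lstar t) ∧
    (∀ t : ℝ, deriv lstar t = (3 * (φ t) ^ 2 - 1) * lstar t) := by
  have hφf : φ = fun t : ℝ => -((1 + Real.exp (2 * t)) ^ (-(1 / 2) : ℝ)) := funext hφ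
  have hφd : ∀ t, HasDerivAt φ ((φ t) ^ 3 - φ t) t := by
    intro t; rw [hφf]; simpa using key t
  have hld : ∀ t, HasDerivAt lstar ((3 * (φ t) ^ 2 - 1) * (2 * ((φ t) ^ 3 - φ t))) t := by
    intro t
    have : HasDerivAt (fun t => 2 * ((φ t) ^ 3 - φ t))
        (2 * (3 * (φ t) ^ 2 * ((φ t) ^ 3 - φ t) - ((φ t) ^ 3 - φ t))) t := by
      have := ((hφd t).pow 3).sub (hφd t)
      simpa [mul_comm, mul_assoc, mul_left_comm] using this.const_mul 2
    have hef : lstar = fun t => 2 * ((φ t) ^ 3 - φ t) := funext hl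
    rw [hef]
    convert this using 1; ring
  refine ⟨fun t => (hφd t).differentiableAt, fun t => (hld t).differentiableAt, ?_, ?_⟩
  · intro t; rw [(hφd t).deriv, hl t]; ring
  · intro t; rw [(hld t).deriv, hl t]
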